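/- Let q ≥ 3 be an odd integer and n ≥ 7 an odd integer. Then the period of any orientable sequence of order n over ℤ_q is at most (q^n − q^{(n+1)/2} − 2q^{(n-1)/2} + q + q^2)/2. -/

import Mathlib

namespace OSeq

variable {q : ℕ}

/-- The `n`-tuple (window) of the sequence `s` at position `i`. -/
def window (s : ℤ → ZMod q) (n : ℕ) (i : ℤ) : Fin n → ZMod q :=
  fun k => s (i + (k : ℕ))

/-- The reverse of an `n`-tuple. -/
def tupRev {n : ℕ} (u : Fin n → ZMod q) : Fin n → ZMod q :=
  fun k => u k.rev

/-- `m` is the (least) period of the periodic sequence `s`. -/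
def IsPeriod (s : ℤ → ZMod q) (m : ℕ) : Prop :=
  0 < m ∧ (∀ i : ℤ, s (i + (m : ℤ)) = s i) ∧
    ∀ m' : ℕ, 0 < m' → (∀ i : ℤ, s (i + (m' : ℤ)) = s i) → m ≤ m'

/-- `s` is an `n`-window sequence of period `m`. -/
def IsNWindowSeq (s : ℤ → ZMod q) (n m : ℕ) : Prop :=
  IsPeriod s m ∧ ∀ i j : ℤ, window s n i = window s n j → i ≡ j [ZMOD (m : ℤ)]

/-- `s` is an orientable sequence of order `n` and period `m`. -/
def IsOS (s : ℤ → ZMod q) (n m : ℕ) : Prop :=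
  IsNWindowSeq s n m ∧ ∀ i j : ℤ, window s n i ≠ tupRev (window s n j)

/-- `s` is a negative orientable sequence of order `n` and period `m`. -/
def IsNOS (s : ℤ → ZMod q) (n m : ℕ) : Prop :=
  IsNWindowSeq s n m ∧ ∀ i j : ℤ, window s n i ≠ - tupRev (window s n j)

/-- `s` is a special orientable sequence of order `n` and period `m`:
orientable and also negative orientable. -/
def IsSpecialOS (s : ℤ → ZMod q) (n m : ℕ) : Prop :=
  IsOS s n m ∧ ∀ i j : ℤ, window s n i ≠ - tupRev (window s n j)

/-- The weight modulo `q` of one period of `s`. -/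
def wq (s : ℤ → ZMod q) (m : ℕ) : ZMod q :=
  ∑ i ∈ Finset.range m, s (i : ℤ)

/-- The alternating sign weight modulo `q` of one period of `s`. -/
def wqA (s : ℤ → ZMod q) (m : ℕ) : ZMod q :=
  ∑ i ∈ Finset.range m, (-1 : ZMod q) ^ (m - 1 - i) * s (i : ℤ)

/-- The Lempel homomorphism `D` on sequences. -/
def D (t : ℤ → ZMod q) : ℤ → ZMod q := fun j => t (j + 1) - t j

/-- The homomorphism `A` on sequences. -/
def A (t : ℤ → ZMod q) : ℤ → ZMod q := fun j => t (j + 1) + t j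

/-- Shift of a sequence by `c`. -/
def shift (t : ℤ → ZMod q) (c : ℤ) : ℤ → ZMod q := fun i => t (i + c)

/-- `t'` is a translate of `t`. -/
def IsTranslate (t t' : ℤ → ZMod q) : Prop := ∃ c : ZMod q, ∀ i : ℤ, t' i = t i + c

/-- `t'` is an alternating sign translate of `t`. -/
def IsAltTranslate (t t' : ℤ → ZMod q) : Prop :=
  ∃ c : ZMod q, ∀ i : ℤ, t' i = t i + (if i % 2 = 0 then c else -c)

/-- Two sequences are (`n`-window) disjoint. -/
def WindowDisjoint (n : ℕ) (s t : ℤ → ZMod q) : Prop :=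
  ∀ i j : ℤ, window s n i ≠ window t n j

/-- Orientable-disjoint. -/
def ODisjoint (n : ℕ) (s t : ℤ → ZMod q) : Prop :=
  WindowDisjoint n s t ∧ ∀ i j : ℤ, window s n i ≠ tupRev (window t n j)

/-- Negative orientable-disjoint (no-disjoint). -/
def NODisjoint (n : ℕ) (s t : ℤ → ZMod q) : Prop :=
  WindowDisjoint n s t ∧ ∀ i j : ℤ, window s n i ≠ - tupRev (window t n j)

/-- Special-orientable-disjoint. -/
def SpecialODisjoint (n : ℕ) (s t : ℤ → ZMod q) : Prop :=
  ODisjoint n s t ∧ ∀ i j : ℤ, window s n i ≠ - tupRev (window t n j)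

/-- The string `a^t` appears in `s`. -/
def HasString (s : ℤ → ZMod q) (a : ZMod q) (t : ℕ) : Prop :=
  ∃ j : ℤ, ∀ k : ℕ, k < t → s (j + (k : ℤ)) = a

/-- There is a run `a^t` of `a` in `s` starting at position `j`. -/
def IsRunAt (s : ℤ → ZMod q) (a : ZMod q) (j : ℤ) (t : ℕ) : Prop :=
  (∀ k : ℕ, k < t → s (j + (k : ℤ)) = a) ∧ s (j - 1) ≠ a ∧ s (j + (t : ℤ)) ≠ a

/-- `a^t` is a maximal run of `a` in `s`: the string `a^t` appears and every
string `a^{t'}` appearing in `s` has `t' ≤ t`. -/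
def IsMaxRun (s : ℤ → ZMod q) (a : ZMod q) (t : ℕ) : Prop :=
  HasString s a t ∧ ∀ t' : ℕ, HasString s a t' → t' ≤ t

/-- `k`-th entry of the alternating string `a, -a, a, -a, ...`. -/
def altVal (a : ZMod q) (k : ℕ) : ZMod q := if k % 2 = 0 then a else -a

/-- The signed string `ạ^t` (alternating `a, -a, ...`) appears in `s`. -/
def HasSignedString (s : ℤ → ZMod q) (a : ZMod q) (t : ℕ) : Prop :=
  ∃ j : ℤ, ∀ k : ℕ, k < t → s (j + (k : ℤ)) = altVal a k

/-- There is a signed run `ạ^t` of `a` in `s` starting at position `j`. -/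
def IsSignedRunAt (s : ℤ → ZMod q) (a : ZMod q) (j : ℤ) (t : ℕ) : Prop :=
  (∀ k : ℕ, k < t → s (j + (k : ℤ)) = altVal a k) ∧
    s (j - 1) ≠ -a ∧ s (j + (t : ℤ)) ≠ altVal a t

/-- `ạ^t` is a maximal signed run of `a` in `s`. -/
def IsMaxSignedRun (s : ℤ → ZMod q) (a : ZMod q) (t : ℕ) : Prop :=
  HasSignedString s a t ∧ ∀ t' : ℕ, HasSignedString s a t' → t' ≤ t

/-- The sequence obtained from the ring sequence `[s_0,...,s_{m-1}]` of `s` by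
inserting one extra symbol `a` at ring position `r`, i.e. with ring sequence
`[s_0,...,s_{r-1}, a, s_r, ..., s_{m-1}]` of length `m+1`. -/
def insert1 (s : ℤ → ZMod q) (m r : ℕ) (a : ZMod q) : ℤ → ZMod q :=
  fun j =>
    let j' := (j % ((m : ℤ) + 1)).toNat
    if j' < r then s (j' : ℤ) else if j' = r then a else s ((j' : ℤ) - 1)

/-- The sequence obtained from the ring sequence `[s_0,...,s_{m-1}]` of `s` by
inserting the two symbols `a, -a` at ring position `r`, i.e. with ring sequence
`[s_0,...,s_{r-1}, a, -a, s_r, ..., s_{m-1}]` of length `m+2`. -/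
def insert2 (s : ℤ → ZMod q) (m r : ℕ) (a : ZMod q) : ℤ → ZMod q :=
  fun j =>
    let j' := (j % ((m : ℤ) + 2)).toNat
    if j' < r then s (j' : ℤ)
    else if j' = r then a
    else if j' = r + 1 then -a
    else s ((j' : ℤ) - 2)

/-- The operation `E_a` (with the convention `E_0(S) = S`). -/
def Emod (s : ℤ → ZMod q) (m r : ℕ) (a : ZMod q) : ℤ → ZMod q :=
  if a = 0 then s else insert1 s m r a

/-- A sequence is good (for order `n`) if every run of `0` has length at most `n-2`. -/
def GoodSeq (s : ℤ → ZMod q) (n : ℕ) : Prop :=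
  ∀ t : ℕ, HasString s 0 t → t ≤ n - 2

/-- A tuple is uniform if it is constant. -/
def Uniform {n : ℕ} (u : Fin n → ZMod q) : Prop := ∃ c : ZMod q, ∀ i, u i = c

/-- A tuple is symmetric if it equals its own reverse. -/
def Symm {n : ℕ} (u : Fin n → ZMod q) : Prop := ∀ i : Fin n, u i = u i.rev

/-- An `n`-tuple is `m`-symmetric (`m ≤ n`) if `u_i = u_{m-1-i}` for `0 ≤ i ≤ m-1`. -/
def MSymm {n : ℕ} (u : Fin n → ZMod q) (m : ℕ) (hm : m ≤ n) : Prop :=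
  ∀ i : Fin m, u (Fin.castLE hm i) = u (Fin.castLE hm i.rev)

/-- An `n`-tuple (`n ≥ 2`) is alternating. -/
def Alternating {n : ℕ} (hn : 2 ≤ n) (u : Fin n → ZMod q) : Prop :=
  u ⟨0, by omega⟩ ≠ u ⟨1, by omega⟩ ∧
    ∀ i : Fin n, u i = if (i : ℕ) % 2 = 0 then u ⟨0, by omega⟩ else u ⟨1, by omega⟩

/-- `L_n(v)`: the set of `n`-tuples whose first `n-r` entries agree with the
`(n-r)`-tuple `v`. -/
def Lset (n r : ℕ) (v : Fin (n - r) → ZMod q) : Set (Fin n → ZMod q) :=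
  {u | ∀ i : Fin (n - r), u (Fin.castLE (Nat.sub_le n r) i) = v i}

/-- The `n`-tuple `u` appears in the sequence `s`. -/
def AppearsIn (s : ℤ → ZMod q) (n : ℕ) (u : Fin n → ZMod q) : Prop :=
  ∃ i : ℤ, window s n i = u

end OSeq

section OSAux

attribute [local instance] Classical.propDecidable

open OSeq

/-- index juggling helper -/
private theorem umk {β : Sort*} {k : ℕ} (w : Fin k → β) {a b : ℕ} (ha : a < k) (hb : b < k)
    (hab : a = b) : w ⟨a, ha⟩ = w ⟨b, hb⟩ := by subst hab; rfl

/-- left-symmetric: first `n-1` entries form a palindrome -/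
private def LSp {q n : ℕ} (u : Fin n → ZMod q) : Prop :=
  ∀ i j : Fin n, (i : ℕ) + (j : ℕ) = n - 2 → u i = u j

/-- right-symmetric: last `n-1` entries form a palindrome -/
private def RSp {q n : ℕ} (u : Fin n → ZMod q) : Prop :=
  ∀ i j : Fin n, (i : ℕ) + (j : ℕ) = n → u i = u j

/-- symmetric -/
private def SYp {q n : ℕ} (u : Fin n → ZMod q) : Prop :=
  ∀ i j : Fin n, (i : ℕ) + (j : ℕ) = n - 1 → u i = u j

private def Palp {q k : ℕ} (v : Fin k → ZMod q) : Prop :=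
  ∀ i j : Fin k, (i : ℕ) + (j : ℕ) = k - 1 → v i = v j

private def pre {q n : ℕ} (u : Fin n → ZMod q) : Fin (n - 1) → ZMod q :=
  fun j => u ⟨j.1, by have := j.2; omega⟩

private def suf {q n : ℕ} (u : Fin n → ZMod q) : Fin (n - 1) → ZMod q :=
  fun j => u ⟨j.1 + 1, by have := j.2; omega⟩

private theorem tupRev_tupRev {q n : ℕ} (u : Fin n → ZMod q) : tupRev (tupRev u) = u := by
  funext k
  show u k.rev.rev = u k
  rw [Fin.rev_rev]

private theorem tupRev_inj {q n : ℕ} : Function.Injective (tupRev : (Fin n → ZMod q) → _) := by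
  intro a b h
  have h2 := congrArg tupRev h
  rwa [tupRev_tupRev, tupRev_tupRev] at h2

private theorem LSp_rev {q n : ℕ} (hn : 2 ≤ n) {u : Fin n → ZMod q} (h : LSp u) :
    RSp (tupRev u) := by
  intro i j hij
  show u i.rev = u j.rev
  apply h
  rw [Fin.val_rev, Fin.val_rev]
  have hi2 := i.2
  have hj2 := j.2
  omega

private theorem RSp_rev {q n : ℕ} (hn : 2 ≤ n) {u : Fin n → ZMod q} (h : RSp u) :
    LSp (tupRev u) := by
  intro i j hij
  show u i.rev = u j.rev
  apply h
  rw [Fin.val_rev, Fin.val_rev]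
  have hi2 := i.2
  have hj2 := j.2
  omega

private theorem SYp_rev_eq {q n : ℕ} {u : Fin n → ZMod q} (h : SYp u) : tupRev u = u := by
  funext k
  show u k.rev = u k
  apply h
  rw [Fin.val_rev]
  have := k.2
  omega

private theorem const_of_consec {q n : ℕ} {u : Fin n → ZMod q}
    (hc : ∀ a : ℕ, (ha : a + 1 < n) → u ⟨a + 1, ha⟩ = u ⟨a, by omega⟩) :
    ∀ i j : Fin n, u i = u j := by
  have key : ∀ a : ℕ, ∀ ha : a < n, u ⟨a, ha⟩ = u ⟨0, by omega⟩ := by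
    intro a
    induction a with
    | zero => intro ha; rfl
    | succ b ih =>
        intro ha
        rw [hc b ha]
        exact ih (by omega)
  intro i j
  exact (key i.1 i.2).trans (key j.1 j.2).symm

private theorem LSp_SYp_const {q n : ℕ} (hn : 7 ≤ n) {u : Fin n → ZMod q}
    (h1 : LSp u) (h2 : SYp u) : ∀ i j : Fin n, u i = u j := by
  apply const_of_consec
  intro a ha
  have e1 : u ⟨a + 1, ha⟩ = u ⟨n - 2 - a, by omega⟩ :=
    h2 ⟨a + 1, ha⟩ ⟨n - 2 - a, by omega⟩ (by show (a + 1) + (n - 2 - a) = n - 1; omega)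
  have e2 : u ⟨n - 2 - a, by omega⟩ = u ⟨a, by omega⟩ :=
    h1 ⟨n - 2 - a, by omega⟩ ⟨a, by omega⟩ (by show (n - 2 - a) + a = n - 2; omega)
  rw [e1]; exact e2

private theorem RSp_SYp_const {q n : ℕ} (hn : 7 ≤ n) {u : Fin n → ZMod q}
    (h1 : RSp u) (h2 : SYp u) : ∀ i j : Fin n, u i = u j := by
  apply const_of_consec
  intro a ha
  have e1 : u ⟨a + 1, ha⟩ = u ⟨n - 1 - a, by omega⟩ :=
    h1 ⟨a + 1, ha⟩ ⟨n - 1 - a, by omega⟩ (by show (a + 1) + (n - 1 - a) = n; omega)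
  have e2 : u ⟨n - 1 - a, by omega⟩ = u ⟨a, by omega⟩ :=
    h2 ⟨n - 1 - a, by omega⟩ ⟨a, by omega⟩ (by show (n - 1 - a) + a = n - 1; omega)
  rw [e1]; exact e2

private theorem LSp_RSp_const {q n : ℕ} (hn : 7 ≤ n) (hodd : n % 2 = 1) {u : Fin n → ZMod q}
    (h1 : LSp u) (h2 : RSp u) : ∀ i j : Fin n, u i = u j := by
  have step : ∀ a : ℕ, (ha : a + 2 < n) → u ⟨a + 2, ha⟩ = u ⟨a, by omega⟩ := by
    intro a ha
    have e1 : u ⟨a, by omega⟩ = u ⟨n - 2 - a, by omega⟩ :=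
      h1 ⟨a, by omega⟩ ⟨n - 2 - a, by omega⟩ (by show a + (n - 2 - a) = n - 2; omega)
    have e2 : u ⟨n - 2 - a, by omega⟩ = u ⟨a + 2, ha⟩ :=
      h2 ⟨n - 2 - a, by omega⟩ ⟨a + 2, ha⟩ (by show (n - 2 - a) + (a + 2) = n; omega)
    exact (e1.trans e2).symm
  have key : ∀ a : ℕ, ∀ ha : a < n, u ⟨a, ha⟩ = u ⟨a % 2, by omega⟩ := by
    intro a
    induction a using Nat.strong_induction_on with
    | _ a ih =>
      intro ha
      by_cases h2a : a < 2
      · exact umk u _ _ (by omega)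
      · have e := step (a - 2) (by omega)
        have e2 : u ⟨a, ha⟩ = u ⟨a - 2, by omega⟩ := by
          rw [← e]; exact umk u _ _ (by omega)
        rw [e2, ih (a - 2) (by omega) (by omega)]
        exact umk u _ _ (by omega)
  have h01 : u ⟨1, by omega⟩ = u ⟨0, by omega⟩ := by
    have e1 : u ⟨0, by omega⟩ = u ⟨n - 2, by omega⟩ :=
      h1 ⟨0, by omega⟩ ⟨n - 2, by omega⟩ (by show 0 + (n - 2) = n - 2; omega)
    have e2 := key (n - 2) (by omega)
    rw [e1, e2]
    exact (umk u _ _ (by omega)).symm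
  intro i j
  have hi' : u i = u ⟨i.1 % 2, by omega⟩ := key i.1 i.2
  have hj' : u j = u ⟨j.1 % 2, by omega⟩ := key j.1 j.2
  rw [hi', hj']
  rcases Nat.mod_two_eq_zero_or_one i.1 with hi2 | hi2 <;>
    rcases Nat.mod_two_eq_zero_or_one j.1 with hj2 | hj2
  · exact umk u _ _ (by omega)
  · rw [umk u (by omega) (by omega) hi2, umk u (by omega) (by omega) hj2]
    exact h01.symm
  · rw [umk u (by omega) (by omega) hi2, umk u (by omega) (by omega) hj2]
    exact h01
  · exact umk u _ _ (by omega)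

private theorem OS_seq_shift {q : ℕ} (s : ℤ → ZMod q) (m : ℕ)
    (hper : ∀ i : ℤ, s (i + (m : ℤ)) = s i) (t i : ℤ) : s (i + (m : ℤ) * t) = s i := by
  induction t using Int.induction_on with
  | zero => simp
  | succ k ih =>
      have h1 : i + (m : ℤ) * ((k : ℤ) + 1) = (i + (m : ℤ) * (k : ℤ)) + (m : ℤ) := by ring
      rw [h1, hper, ih]
  | pred k ih =>
      have h1 : i + (m : ℤ) * (-(k : ℤ)) = (i + (m : ℤ) * (-(k : ℤ) - 1)) + (m : ℤ) := by ring
      rw [h1, hper] at ih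
      exact ih

private theorem OS_window_congr {q : ℕ} (s : ℤ → ZMod q) (n m : ℕ)
    (hper : ∀ i : ℤ, s (i + (m : ℤ)) = s i) {i j : ℤ} (hij : i ≡ j [ZMOD (m : ℤ)]) :
    window s n i = window s n j := by
  obtain ⟨t, ht⟩ := hij.dvd
  funext k
  show s (i + ((k : ℕ) : ℤ)) = s (j + ((k : ℕ) : ℤ))
  have h1 : j + ((k : ℕ) : ℤ) = (i + ((k : ℕ) : ℤ)) + (m : ℤ) * t := by linear_combination ht
  rw [h1, OS_seq_shift s m hper]

private noncomputable def OSidx {q : ℕ} (s : ℤ → ZMod q) (n : ℕ) (u : Fin n → ZMod q) : ℤ :=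
  if h : ∃ i : ℤ, window s n i = u then h.choose else 0

private theorem OSidx_spec {q : ℕ} (s : ℤ → ZMod q) (n : ℕ) (u : Fin n → ZMod q)
    (h : ∃ i : ℤ, window s n i = u) : window s n (OSidx s n u) = u := by
  rw [OSidx, dif_pos h]
  exact h.choose_spec

private theorem rev_window_coord {q n : ℕ} (s : ℤ → ZMod q) (t : ℤ) (k : Fin n) :
    tupRev (window s n t) k = s (t + ((n - (k.1 + 1) : ℕ) : ℤ)) := by
  show s (t + ((k.rev : ℕ) : ℤ)) = _
  rw [Fin.val_rev]

end OSAux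

section OSAux2

attribute [local instance] Classical.propDecidable

open OSeq

private theorem OS_fiber_L {q n m : ℕ} (hq : 3 ≤ q) (hn : 7 ≤ n) (s : ℤ → ZMod q)
    (hper : ∀ i : ℤ, s (i + (m : ℤ)) = s i)
    (hwin : ∀ i j : ℤ, window s n i = window s n j → i ≡ j [ZMOD (m : ℤ)])
    (hrev : ∀ i j : ℤ, window s n i ≠ tupRev (window s n j))
    (W : Finset (Fin n → ZMod q)) (hWmem : ∀ u ∈ W, ∃ i : ℤ, window s n i = u)
    (v : Fin (n - 1) → ZMod q)
    (F : Finset (Fin n → ZMod q)) (hF : ∀ u ∈ F, u ∈ W ∧ LSp u ∧ pre u = v) :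
    2 * F.card ≤ q := by
  haveI : NeZero q := ⟨by omega⟩
  have hFW : F ⊆ W := fun u hu => (hF u hu).1
  have hidx : ∀ u ∈ W, window s n (OSidx s n u) = u := fun u hu => OSidx_spec s n u (hWmem u hu)
  set g : (Fin n → ZMod q) → (Fin n → ZMod q) :=
    fun u => tupRev (window s n (OSidx s n u - 1)) with hg
  have hgnW : ∀ u, g u ∉ W := by
    intro u hgu
    obtain ⟨i', hi'⟩ := hWmem _ hgu
    exact hrev i' (OSidx s n u - 1) hi'
  have hgpre : ∀ u ∈ F, pre (g u) = v := by
    intro u hu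
    obtain ⟨huW, hLS, hpre⟩ := hF u hu
    have hwu := hidx u huW
    funext j
    have hj : (j : ℕ) < n - 1 := j.2
    calc pre (g u) j
        = s (OSidx s n u - 1 + ((n - (j.1 + 1) : ℕ) : ℤ)) :=
          rev_window_coord s (OSidx s n u - 1) ⟨j.1, by omega⟩
      _ = s (OSidx s n u + ((n - 2 - j.1 : ℕ) : ℤ)) := by
          congr 1
          have e : (n - (j.1 + 1)) = (n - 2 - j.1) + 1 := by omega
          rw [e]
          push_cast
          ring
      _ = window s n (OSidx s n u) ⟨n - 2 - j.1, by omega⟩ := rfl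
      _ = u ⟨n - 2 - j.1, by omega⟩ := by rw [hwu]
      _ = u ⟨j.1, by omega⟩ :=
          hLS ⟨n - 2 - j.1, by omega⟩ ⟨j.1, by omega⟩ (by show (n - 2 - j.1) + j.1 = n - 2; omega)
      _ = v j := by rw [← hpre]; rfl
  have hginj : Set.InjOn g F := by
    intro u1 h1 u2 h2 heq
    have hw : window s n (OSidx s n u1 - 1) = window s n (OSidx s n u2 - 1) := tupRev_inj heq
    have hmod := hwin _ _ hw
    have hmod2 : OSidx s n u1 ≡ OSidx s n u2 [ZMOD (m : ℤ)] := by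
      have h3 := hmod.add_right 1
      simpa using h3
    have h4 := OS_window_congr s n m hper hmod2
    rw [hidx u1 (hFW (Finset.mem_coe.mp h1)), hidx u2 (hFW (Finset.mem_coe.mp h2))] at h4
    exact h4
  set Tv := Finset.univ.filter (fun u : Fin n → ZMod q => pre u = v) with hTv
  have hTvcard : Tv.card ≤ q := by
    have h5 : Tv.card ≤ (Finset.univ : Finset (ZMod q)).card := by
      apply Finset.card_le_card_of_injOn (fun u : Fin n → ZMod q => u ⟨n - 1, by omega⟩)
        (fun a _ => Finset.mem_univ _)
      intro u1 h1 u2 h2 he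
      rw [Finset.mem_coe, hTv, Finset.mem_filter] at h1 h2
      funext k
      by_cases hk : (k : ℕ) < n - 1
      · have e1 := congrFun h1.2 (⟨k.1, hk⟩ : Fin (n - 1))
        have e2 := congrFun h2.2 (⟨k.1, hk⟩ : Fin (n - 1))
        exact e1.trans e2.symm
      · have hk2 : k = ⟨n - 1, by omega⟩ := Fin.ext (by show (k : ℕ) = n - 1; have := k.2; omega)
        rw [hk2]
        exact he
    rw [Finset.card_univ, ZMod.card] at h5
    exact h5
  have hsub : F ∪ F.image g ⊆ Tv := by
    intro u hu
    rw [Finset.mem_union] at hu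
    rw [hTv, Finset.mem_filter]
    refine ⟨Finset.mem_univ _, ?_⟩
    rcases hu with hu | hu
    · exact (hF u hu).2.2
    · obtain ⟨w, hw, hwu⟩ := Finset.mem_image.mp hu
      rw [← hwu]
      exact hgpre w hw
  have hdisj : Disjoint F (F.image g) := by
    rw [Finset.disjoint_left]
    intro u huF huI
    obtain ⟨w, _, hwu⟩ := Finset.mem_image.mp huI
    exact hgnW w (hwu ▸ hFW huF)
  have hcard := (Finset.card_le_card hsub).trans hTvcard
  rw [Finset.card_union_of_disjoint hdisj, Finset.card_image_of_injOn hginj] at hcard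
  omega

private theorem OS_fiber_R {q n m : ℕ} (hq : 3 ≤ q) (hn : 7 ≤ n) (s : ℤ → ZMod q)
    (hper : ∀ i : ℤ, s (i + (m : ℤ)) = s i)
    (hwin : ∀ i j : ℤ, window s n i = window s n j → i ≡ j [ZMOD (m : ℤ)])
    (hrev : ∀ i j : ℤ, window s n i ≠ tupRev (window s n j))
    (W : Finset (Fin n → ZMod q)) (hWmem : ∀ u ∈ W, ∃ i : ℤ, window s n i = u)
    (v : Fin (n - 1) → ZMod q)
    (F : Finset (Fin n → ZMod q)) (hF : ∀ u ∈ F, u ∈ W ∧ RSp u ∧ suf u = v) :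
    2 * F.card ≤ q := by
  haveI : NeZero q := ⟨by omega⟩
  have hFW : F ⊆ W := fun u hu => (hF u hu).1
  have hidx : ∀ u ∈ W, window s n (OSidx s n u) = u := fun u hu => OSidx_spec s n u (hWmem u hu)
  set g : (Fin n → ZMod q) → (Fin n → ZMod q) :=
    fun u => tupRev (window s n (OSidx s n u + 1)) with hg
  have hgnW : ∀ u, g u ∉ W := by
    intro u hgu
    obtain ⟨i', hi'⟩ := hWmem _ hgu
    exact hrev i' (OSidx s n u + 1) hi'
  have hgsuf : ∀ u ∈ F, suf (g u) = v := by
    intro u hu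
    obtain ⟨huW, hRS, hsuf⟩ := hF u hu
    have hwu := hidx u huW
    funext j
    have hj : (j : ℕ) < n - 1 := j.2
    calc suf (g u) j
        = s (OSidx s n u + 1 + ((n - ((j.1 + 1) + 1) : ℕ) : ℤ)) :=
          rev_window_coord s (OSidx s n u + 1) ⟨j.1 + 1, by omega⟩
      _ = s (OSidx s n u + ((n - 1 - j.1 : ℕ) : ℤ)) := by
          congr 1
          have e : (n - (j.1 + 1 + 1)) + 1 = (n - 1 - j.1) := by omega
          rw [← e]
          push_cast
          ring
      _ = window s n (OSidx s n u) ⟨n - 1 - j.1, by omega⟩ := rfl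
      _ = u ⟨n - 1 - j.1, by omega⟩ := by rw [hwu]
      _ = u ⟨j.1 + 1, by omega⟩ :=
          hRS ⟨n - 1 - j.1, by omega⟩ ⟨j.1 + 1, by omega⟩
            (by show (n - 1 - j.1) + (j.1 + 1) = n; omega)
      _ = v j := by rw [← hsuf]; rfl
  have hginj : Set.InjOn g F := by
    intro u1 h1 u2 h2 heq
    have hw : window s n (OSidx s n u1 + 1) = window s n (OSidx s n u2 + 1) := tupRev_inj heq
    have hmod := hwin _ _ hw
    have hmod2 : OSidx s n u1 ≡ OSidx s n u2 [ZMOD (m : ℤ)] := by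
      have h3 := hmod.add_right (-1)
      simpa using h3
    have h4 := OS_window_congr s n m hper hmod2
    rw [hidx u1 (hFW (Finset.mem_coe.mp h1)), hidx u2 (hFW (Finset.mem_coe.mp h2))] at h4
    exact h4
  set Tv := Finset.univ.filter (fun u : Fin n → ZMod q => suf u = v) with hTv
  have hTvcard : Tv.card ≤ q := by
    have h5 : Tv.card ≤ (Finset.univ : Finset (ZMod q)).card := by
      apply Finset.card_le_card_of_injOn (fun u : Fin n → ZMod q => u ⟨0, by omega⟩)
        (fun a _ => Finset.mem_univ _)
      intro u1 h1 u2 h2 he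
      rw [Finset.mem_coe, hTv, Finset.mem_filter] at h1 h2
      funext k
      by_cases hk : (k : ℕ) = 0
      · have hk2 : k = ⟨0, by omega⟩ := Fin.ext (by show (k : ℕ) = 0; omega)
        rw [hk2]
        exact he
      · have hk1 : (k : ℕ) - 1 < n - 1 := by have := k.2; omega
        have e1 := congrFun h1.2 (⟨k.1 - 1, hk1⟩ : Fin (n - 1))
        have e2 := congrFun h2.2 (⟨k.1 - 1, hk1⟩ : Fin (n - 1))
        have ek : (⟨(k.1 - 1) + 1, by omega⟩ : Fin n) = k := Fin.ext (by show k.1 - 1 + 1 = k.1; omega)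
        have ef1 : u1 k = suf u1 ⟨k.1 - 1, hk1⟩ := by
          conv_lhs => rw [← ek]
          rfl
        have ef2 : u2 k = suf u2 ⟨k.1 - 1, hk1⟩ := by
          conv_lhs => rw [← ek]
          rfl
        rw [ef1, ef2, e1, e2]
    rw [Finset.card_univ, ZMod.card] at h5
    exact h5
  have hsub : F ∪ F.image g ⊆ Tv := by
    intro u hu
    rw [Finset.mem_union] at hu
    rw [hTv, Finset.mem_filter]
    refine ⟨Finset.mem_univ _, ?_⟩
    rcases hu with hu | hu
    · exact (hF u hu).2.2
    · obtain ⟨w, hw, hwu⟩ := Finset.mem_image.mp hu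
      rw [← hwu]
      exact hgsuf w hw
  have hdisj : Disjoint F (F.image g) := by
    rw [Finset.disjoint_left]
    intro u huF huI
    obtain ⟨w, _, hwu⟩ := Finset.mem_image.mp huI
    exact hgnW w (hwu ▸ hFW huF)
  have hcard := (Finset.card_le_card hsub).trans hTvcard
  rw [Finset.card_union_of_disjoint hdisj, Finset.card_image_of_injOn hginj] at hcard
  omega

end OSAux2

section OSAux3

attribute [local instance] Classical.propDecidable

open OSeq

private theorem Pal_card {q n : ℕ} [NeZero q] (hq : 3 ≤ q) (hn : 7 ≤ n) (hodd : n % 2 = 1) :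
    (Finset.univ.filter (fun v : Fin (n - 1) → ZMod q => Palp v)).card ≤ q ^ ((n - 1) / 2) := by
  set h := (n - 1) / 2 with hh
  have h5 : (Finset.univ.filter (fun v : Fin (n - 1) → ZMod q => Palp v)).card
      ≤ (Finset.univ : Finset (Fin h → ZMod q)).card := by
    apply Finset.card_le_card_of_injOn
      (fun v (i : Fin h) => v ⟨i.1, by have := i.2; omega⟩) (fun a _ => Finset.mem_univ _)
    intro v1 hv1 v2 hv2 he
    rw [Finset.mem_coe, Finset.mem_filter] at hv1 hv2
    funext j
    by_cases hj : (j : ℕ) < h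
    · exact congrFun he ⟨j.1, hj⟩
    · have hj2 := j.2
      have e1 := hv1.2 j ⟨n - 2 - j.1, by omega⟩
        (by show j.1 + (n - 2 - j.1) = n - 1 - 1; omega)
      have e2 := hv2.2 j ⟨n - 2 - j.1, by omega⟩
        (by show j.1 + (n - 2 - j.1) = n - 1 - 1; omega)
      have e3 := congrFun he ⟨n - 2 - j.1, by omega⟩
      rw [e1, e2]
      exact e3
  rw [Finset.card_univ, Fintype.card_fun, ZMod.card, Fintype.card_fin] at h5
  exact h5

private theorem OS_count_L {q n m : ℕ} (hq : 3 ≤ q) (hqodd : Odd q) (hn : 7 ≤ n)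
    (hodd : n % 2 = 1) (s : ℤ → ZMod q)
    (hper : ∀ i : ℤ, s (i + (m : ℤ)) = s i)
    (hwin : ∀ i j : ℤ, window s n i = window s n j → i ≡ j [ZMOD (m : ℤ)])
    (hrev : ∀ i j : ℤ, window s n i ≠ tupRev (window s n j))
    (W : Finset (Fin n → ZMod q)) (hWmem : ∀ u ∈ W, ∃ i : ℤ, window s n i = u) :
    (W.filter (fun u => LSp u)).card ≤ (q / 2) * q ^ ((n - 1) / 2) := by
  haveI : NeZero q := ⟨by omega⟩
  set PalF := Finset.univ.filter (fun v : Fin (n - 1) → ZMod q => Palp v) with hPalF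
  have hmemPal : ∀ u ∈ W.filter (fun u => LSp u), pre u ∈ PalF := by
    intro u hu
    rw [Finset.mem_filter] at hu
    rw [hPalF, Finset.mem_filter]
    refine ⟨Finset.mem_univ _, ?_⟩
    intro i j hij
    have hi2 := i.2; have hj2 := j.2
    exact hu.2 ⟨i.1, by omega⟩ ⟨j.1, by omega⟩ (by show i.1 + j.1 = n - 2; omega)
  have hsum := Finset.card_eq_sum_card_fiberwise hmemPal
  rw [hsum]
  refine le_trans (Finset.sum_le_card_nsmul PalF _ (q / 2) ?_) ?_
  · intro v _
    rw [Nat.le_div_iff_mul_le (by norm_num : 0 < 2), Nat.mul_comm]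
    exact OS_fiber_L hq hn s hper hwin hrev W hWmem v _ (fun u hu => by
      rw [Finset.mem_filter, Finset.mem_filter] at hu
      exact ⟨hu.1.1, hu.1.2, hu.2⟩)
  · rw [smul_eq_mul]
    calc PalF.card * (q / 2) ≤ q ^ ((n - 1) / 2) * (q / 2) :=
          Nat.mul_le_mul_right _ (Pal_card hq hn hodd)
      _ = (q / 2) * q ^ ((n - 1) / 2) := Nat.mul_comm _ _

private theorem OS_count_R {q n m : ℕ} (hq : 3 ≤ q) (hqodd : Odd q) (hn : 7 ≤ n)
    (hodd : n % 2 = 1) (s : ℤ → ZMod q)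
    (hper : ∀ i : ℤ, s (i + (m : ℤ)) = s i)
    (hwin : ∀ i j : ℤ, window s n i = window s n j → i ≡ j [ZMOD (m : ℤ)])
    (hrev : ∀ i j : ℤ, window s n i ≠ tupRev (window s n j))
    (W : Finset (Fin n → ZMod q)) (hWmem : ∀ u ∈ W, ∃ i : ℤ, window s n i = u) :
    (W.filter (fun u => RSp u)).card ≤ (q / 2) * q ^ ((n - 1) / 2) := by
  haveI : NeZero q := ⟨by omega⟩
  set PalF := Finset.univ.filter (fun v : Fin (n - 1) → ZMod q => Palp v) with hPalF
  have hmemPal : ∀ u ∈ W.filter (fun u => RSp u), suf u ∈ PalF := by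
    intro u hu
    rw [Finset.mem_filter] at hu
    rw [hPalF, Finset.mem_filter]
    refine ⟨Finset.mem_univ _, ?_⟩
    intro i j hij
    have hi2 := i.2; have hj2 := j.2
    exact hu.2 ⟨i.1 + 1, by omega⟩ ⟨j.1 + 1, by omega⟩
      (by show (i.1 + 1) + (j.1 + 1) = n; omega)
  have hsum := Finset.card_eq_sum_card_fiberwise hmemPal
  rw [hsum]
  refine le_trans (Finset.sum_le_card_nsmul PalF _ (q / 2) ?_) ?_
  · intro v _
    rw [Nat.le_div_iff_mul_le (by norm_num : 0 < 2), Nat.mul_comm]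
    exact OS_fiber_R hq hn s hper hwin hrev W hWmem v _ (fun u hu => by
      rw [Finset.mem_filter, Finset.mem_filter] at hu
      exact ⟨hu.1.1, hu.1.2, hu.2⟩)
  · rw [smul_eq_mul]
    calc PalF.card * (q / 2) ≤ q ^ ((n - 1) / 2) * (q / 2) :=
          Nat.mul_le_mul_right _ (Pal_card hq hn hodd)
      _ = (q / 2) * q ^ ((n - 1) / 2) := Nat.mul_comm _ _

private theorem card_le_q_of_const {q n : ℕ} (hq : 3 ≤ q) (hn : 7 ≤ n)
    (T : Finset (Fin n → ZMod q)) (hT : ∀ u ∈ T, ∀ i j : Fin n, u i = u j) : T.card ≤ q := by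
  haveI : NeZero q := ⟨by omega⟩
  have h5 : T.card ≤ (Finset.univ : Finset (ZMod q)).card := by
    apply Finset.card_le_card_of_injOn (fun u : Fin n → ZMod q => u ⟨0, by omega⟩)
      (fun a _ => Finset.mem_univ _)
    intro u1 h1 u2 h2 he
    funext k
    rw [hT u1 (Finset.mem_coe.mp h1) k ⟨0, by omega⟩, hT u2 (Finset.mem_coe.mp h2) k ⟨0, by omega⟩]
    exact he
  rw [Finset.card_univ, ZMod.card] at h5
  exact h5

end OSAux3


open OSeq
section OSMain

attribute [local instance] Classical.propDecidable

set_option maxHeartbeats 2000000 in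
/-- For odd `q ≥ 3` and odd `n ≥ 7`, the period of any orientable sequence of
order `n` over `ℤ_q` is at most `(q^n - q^{(n+1)/2} - 2q^{(n-1)/2} + q + q^2)/2`. -/
theorem period_le_of_orientable_odd_q_odd_n {q n m : ℕ} (hq : 3 ≤ q) (hqodd : Odd q)
    (hn : 7 ≤ n) (hnodd : Odd n) (s : ℤ → ZMod q) (hS : IsOS s n m) :
    2 * (m : ℤ) ≤ (q : ℤ) ^ n - (q : ℤ) ^ ((n + 1) / 2) - 2 * (q : ℤ) ^ ((n - 1) / 2)
      + q + (q : ℤ) ^ 2 := by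
  haveI : NeZero q := ⟨by omega⟩
  obtain ⟨⟨⟨hm0, hper, -⟩, hwin⟩, hrev⟩ := hS
  have hodd : n % 2 = 1 := Nat.odd_iff.mp hnodd
  set h : ℕ := (n - 1) / 2 with hh
  have hodd2 : n = 2 * h + 1 := by omega
  -- the set of windows
  set W : Finset (Fin n → ZMod q) :=
    (Finset.range m).image (fun i : ℕ => window s n (i : ℤ)) with hWdef
  have hWmem : ∀ u ∈ W, ∃ i : ℤ, window s n i = u := by
    intro u hu
    rw [hWdef, Finset.mem_image] at hu
    obtain ⟨i, _, hi⟩ := hu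
    exact ⟨(i : ℤ), hi⟩
  have hWcard : W.card = m := by
    rw [hWdef, Finset.card_image_of_injOn, Finset.card_range]
    intro a ha b hb he
    rw [Finset.mem_coe, Finset.mem_range] at ha hb
    have h1 : (a : ℤ) % (m : ℤ) = (b : ℤ) % (m : ℤ) := hwin _ _ he
    rw [Int.emod_eq_of_lt (by positivity) (by exact_mod_cast ha),
        Int.emod_eq_of_lt (by positivity) (by exact_mod_cast hb)] at h1
    exact_mod_cast h1
  set Wr := W.image tupRev with hWrdef
  set W2 := W ∪ Wr with hW2def
  set SymF := Finset.univ.filter (fun u : Fin n → ZMod q => SYp u) with hSymF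
  set LF := Finset.univ.filter (fun u : Fin n → ZMod q => LSp u) with hLF
  set RF := Finset.univ.filter (fun u : Fin n → ZMod q => RSp u) with hRF
  have hWrcard : Wr.card = m := by
    rw [hWrdef, Finset.card_image_of_injective _ tupRev_inj, hWcard]
  have hWWr : Disjoint W Wr := by
    rw [Finset.disjoint_left]
    intro u huW huWr
    obtain ⟨w, hw, hwu⟩ := Finset.mem_image.mp (by rwa [hWrdef] at huWr)
    obtain ⟨i, hi⟩ := hWmem u huW
    obtain ⟨j, hj⟩ := hWmem w hw
    apply hrev i j
    rw [hi, hj]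
    exact hwu.symm
  have hW2card : W2.card = m + m := by
    rw [hW2def, Finset.card_union_of_disjoint hWWr, hWcard, hWrcard]
  have hSymW2 : ∀ u ∈ W2, ¬ SYp u := by
    intro u hu hSYu
    have hrevu : tupRev u = u := SYp_rev_eq hSYu
    have hinW : ∀ w ∈ W, w = u → False := by
      intro w hwW hwu
      obtain ⟨i, hi⟩ := hWmem w hwW
      apply hrev i i
      rw [hi, hwu]
      exact hrevu.symm
    rw [hW2def, Finset.mem_union] at hu
    rcases hu with hu | hu
    · exact hinW u hu rfl
    · obtain ⟨w, hw, hwu⟩ := Finset.mem_image.mp (by rwa [hWrdef] at hu)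
      apply hinW w hw
      rw [← tupRev_tupRev w, hwu]
      exact hrevu
  -- lower bound on the number of symmetric tuples
  have hSymlow : q ^ (h + 1) ≤ SymF.card := by
    have h5 : (Finset.univ : Finset (Fin (h + 1) → ZMod q)).card ≤ SymF.card := by
      apply Finset.card_le_card_of_injOn
        (fun w (j : Fin n) => if hj : j.1 < h + 1 then w ⟨j.1, hj⟩
          else w ⟨n - 1 - j.1, by have := j.2; omega⟩)
      · intro w _
        rw [Finset.mem_coe, Finset.mem_filter]
        refine ⟨Finset.mem_univ _, ?_⟩
        intro i j hij
        have hi2 := i.2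
        have hj2 := j.2
        dsimp only
        by_cases hi : i.1 < h + 1 <;> by_cases hj : j.1 < h + 1
        · rw [dif_pos hi, dif_pos hj]; exact umk w _ _ (by omega)
        · rw [dif_pos hi, dif_neg hj]; exact umk w _ _ (by omega)
        · rw [dif_neg hi, dif_pos hj]; exact umk w _ _ (by omega)
        · exact absurd hij (by omega)
      · intro w1 _ w2 _ he
        funext j
        have hj2 := j.2
        have e1 := congrFun he (⟨j.1, by omega⟩ : Fin n)
        dsimp only at e1
        split_ifs at e1 <;> first | exact e1 | omega
    rw [Finset.card_univ, Fintype.card_fun, ZMod.card, Fintype.card_fin] at h5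
    exact h5
  -- lower bound on the number of left-symmetric tuples
  have hLFlow : q ^ (h + 1) ≤ LF.card := by
    have h5 : (Finset.univ : Finset (Fin (h + 1) → ZMod q)).card ≤ LF.card := by
      apply Finset.card_le_card_of_injOn
        (fun w (j : Fin n) => if hj : j.1 < h then w ⟨j.1, by omega⟩
          else if hj1 : j.1 = n - 1 then w ⟨h, by omega⟩
          else w ⟨n - 2 - j.1, by have := j.2; omega⟩)
      · intro w _
        rw [Finset.mem_coe, Finset.mem_filter]
        refine ⟨Finset.mem_univ _, ?_⟩
        intro i j hij
        have hi2 := i.2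
        have hj2 := j.2
        dsimp only
        by_cases hi : i.1 < h <;> by_cases hj : j.1 < h
        · exact absurd hij (by omega)
        · rw [dif_pos hi, dif_neg hj, dif_neg (show ¬ j.1 = n - 1 by omega)]
          exact umk w _ _ (by omega)
        · rw [dif_neg hi, dif_pos hj, dif_neg (show ¬ i.1 = n - 1 by omega)]
          exact umk w _ _ (by omega)
        · exact absurd hij (by omega)
      · intro w1 _ w2 _ he
        funext j
        have hj2 := j.2
        by_cases hj : j.1 < h
        · have e1 := congrFun he (⟨j.1, by omega⟩ : Fin n)
          dsimp only at e1
          split_ifs at e1 <;> first | exact e1 | omega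
        · have e1 := congrFun he (⟨n - 1, by omega⟩ : Fin n)
          dsimp only at e1
          have hjh : j = (⟨h, by omega⟩ : Fin (h + 1)) := Fin.ext (by show (j : ℕ) = h; omega)
          split_ifs at e1 <;> first | (rw [hjh]; exact e1) | omega
    rw [Finset.card_univ, Fintype.card_fun, ZMod.card, Fintype.card_fin] at h5
    exact h5
  -- lower bound on the number of right-symmetric tuples
  have hRFlow : q ^ (h + 1) ≤ RF.card := by
    have h5 : (Finset.univ : Finset (Fin (h + 1) → ZMod q)).card ≤ RF.card := by
      apply Finset.card_le_card_of_injOn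
        (fun w (j : Fin n) => if hj0 : j.1 = 0 then w ⟨0, by omega⟩
          else if hj : j.1 < h + 1 then w ⟨j.1, hj⟩
          else w ⟨n - j.1, by have := j.2; omega⟩)
      · intro w _
        rw [Finset.mem_coe, Finset.mem_filter]
        refine ⟨Finset.mem_univ _, ?_⟩
        intro i j hij
        have hi2 := i.2
        have hj2 := j.2
        dsimp only
        by_cases hi : i.1 < h + 1 <;> by_cases hj : j.1 < h + 1
        · exact absurd hij (by omega)
        · rw [dif_neg (show ¬ i.1 = 0 by omega), dif_pos hi,
              dif_neg (show ¬ j.1 = 0 by omega), dif_neg hj]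
          exact umk w _ _ (by omega)
        · rw [dif_neg (show ¬ i.1 = 0 by omega), dif_neg hi,
              dif_neg (show ¬ j.1 = 0 by omega), dif_pos hj]
          exact umk w _ _ (by omega)
        · exact absurd hij (by omega)
      · intro w1 _ w2 _ he
        funext j
        have hj2 := j.2
        by_cases hj0 : j.1 = 0
        · have e1 := congrFun he (⟨0, by omega⟩ : Fin n)
          dsimp only at e1
          have hjh : j = (⟨0, by omega⟩ : Fin (h + 1)) := Fin.ext (by show (j : ℕ) = 0; omega)
          split_ifs at e1 <;> first | (rw [hjh]; exact e1) | omega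
        · have e1 := congrFun he (⟨j.1, by omega⟩ : Fin n)
          dsimp only at e1
          split_ifs at e1 <;> first | exact e1 | omega
    rw [Finset.card_univ, Fintype.card_fun, ZMod.card, Fintype.card_fin] at h5
    exact h5
  -- bounds on intersections with the symmetric tuples
  have hLSymq : ((LF \ W2) ∩ SymF).card ≤ q := by
    apply card_le_q_of_const hq hn
    intro u hu
    rw [Finset.mem_inter, Finset.mem_sdiff, hLF, hSymF, Finset.mem_filter,
      Finset.mem_filter] at hu
    exact LSp_SYp_const hn hu.1.1.2 hu.2.2
  have hRSymq : ((RF \ W2) ∩ SymF).card ≤ q := by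
    apply card_le_q_of_const hq hn
    intro u hu
    rw [Finset.mem_inter, Finset.mem_sdiff, hRF, hSymF, Finset.mem_filter,
      Finset.mem_filter] at hu
    exact RSp_SYp_const hn hu.1.1.2 hu.2.2
  -- relating reversed windows
  have hWrL : (Wr.filter (fun u => LSp u)).card = (W.filter (fun u => RSp u)).card := by
    apply Finset.card_bij' (fun u _ => tupRev u) (fun u _ => tupRev u)
    · intro a ha
      rw [Finset.mem_filter] at ha ⊢
      obtain ⟨haWr, haL⟩ := ha
      obtain ⟨w, hw, hwu⟩ := Finset.mem_image.mp (by rwa [hWrdef] at haWr)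
      constructor
      · rw [← hwu, tupRev_tupRev]
        exact hw
      · exact LSp_rev (by omega) haL
    · intro a ha
      rw [Finset.mem_filter] at ha ⊢
      obtain ⟨haW, haR⟩ := ha
      constructor
      · rw [hWrdef]
        exact Finset.mem_image_of_mem _ haW
      · exact RSp_rev (by omega) haR
    · intro a _
      exact tupRev_tupRev a
    · intro a _
      exact tupRev_tupRev a
  have hWrR : (Wr.filter (fun u => RSp u)).card = (W.filter (fun u => LSp u)).card := by
    apply Finset.card_bij' (fun u _ => tupRev u) (fun u _ => tupRev u)
    · intro a ha
      rw [Finset.mem_filter] at ha ⊢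
      obtain ⟨haWr, haR⟩ := ha
      obtain ⟨w, hw, hwu⟩ := Finset.mem_image.mp (by rwa [hWrdef] at haWr)
      constructor
      · rw [← hwu, tupRev_tupRev]
        exact hw
      · exact RSp_rev (by omega) haR
    · intro a ha
      rw [Finset.mem_filter] at ha ⊢
      obtain ⟨haW, haL⟩ := ha
      constructor
      · rw [hWrdef]
        exact Finset.mem_image_of_mem _ haW
      · exact LSp_rev (by omega) haL
    · intro a _
      exact tupRev_tupRev a
    · intro a _
      exact tupRev_tupRev a
  -- the key counting bounds
  have hcountL := OS_count_L hq hqodd hn hodd s hper hwin hrev W hWmem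
  have hcountR := OS_count_R hq hqodd hn hodd s hper hwin hrev W hWmem
  have hLW2 : (LF ∩ W2).card ≤ 2 * ((q / 2) * q ^ h) := by
    have hsub2 : LF ∩ W2 ⊆ (W.filter (fun u => LSp u)) ∪ (Wr.filter (fun u => LSp u)) := by
      intro u hu
      rw [Finset.mem_inter, hLF, Finset.mem_filter] at hu
      obtain ⟨⟨_, hLSu⟩, huW2⟩ := hu
      rw [hW2def, Finset.mem_union] at huW2
      rw [Finset.mem_union, Finset.mem_filter, Finset.mem_filter]
      rcases huW2 with h9 | h9
      · exact Or.inl ⟨h9, hLSu⟩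
      · exact Or.inr ⟨h9, hLSu⟩
    calc (LF ∩ W2).card
        ≤ ((W.filter (fun u => LSp u)) ∪ (Wr.filter (fun u => LSp u))).card :=
          Finset.card_le_card hsub2
      _ ≤ (W.filter (fun u => LSp u)).card + (Wr.filter (fun u => LSp u)).card :=
          Finset.card_union_le _ _
      _ = (W.filter (fun u => LSp u)).card + (W.filter (fun u => RSp u)).card := by rw [hWrL]
      _ ≤ (q / 2) * q ^ h + (q / 2) * q ^ h := Nat.add_le_add hcountL hcountR
      _ = 2 * ((q / 2) * q ^ h) := by ring
  have hRW2 : (RF ∩ W2).card ≤ 2 * ((q / 2) * q ^ h) := by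
    have hsub2 : RF ∩ W2 ⊆ (W.filter (fun u => RSp u)) ∪ (Wr.filter (fun u => RSp u)) := by
      intro u hu
      rw [Finset.mem_inter, hRF, Finset.mem_filter] at hu
      obtain ⟨⟨_, hRSu⟩, huW2⟩ := hu
      rw [hW2def, Finset.mem_union] at huW2
      rw [Finset.mem_union, Finset.mem_filter, Finset.mem_filter]
      rcases huW2 with h9 | h9
      · exact Or.inl ⟨h9, hRSu⟩
      · exact Or.inr ⟨h9, hRSu⟩
    calc (RF ∩ W2).card
        ≤ ((W.filter (fun u => RSp u)) ∪ (Wr.filter (fun u => RSp u))).card :=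
          Finset.card_le_card hsub2
      _ ≤ (W.filter (fun u => RSp u)).card + (Wr.filter (fun u => RSp u)).card :=
          Finset.card_union_le _ _
      _ = (W.filter (fun u => RSp u)).card + (W.filter (fun u => LSp u)).card := by rw [hWrR]
      _ ≤ (q / 2) * q ^ h + (q / 2) * q ^ h := Nat.add_le_add hcountR hcountL
      _ = 2 * ((q / 2) * q ^ h) := by ring
  -- the three disjoint families of non-windows
  have hdBC : Disjoint ((LF \ W2) \ SymF) ((RF \ W2) \ SymF) := by
    rw [Finset.disjoint_left]
    intro u huB huC
    rw [Finset.mem_sdiff, Finset.mem_sdiff, hLF, Finset.mem_filter] at huB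
    rw [Finset.mem_sdiff, Finset.mem_sdiff, hRF, Finset.mem_filter] at huC
    apply huB.2
    rw [hSymF, Finset.mem_filter]
    refine ⟨Finset.mem_univ _, ?_⟩
    intro i j _
    exact LSp_RSp_const hn hodd huB.1.1.2 huC.1.1.2 i j
  have hdA_BC : Disjoint SymF (((LF \ W2) \ SymF) ∪ ((RF \ W2) \ SymF)) := by
    rw [Finset.disjoint_union_right]
    exact ⟨Finset.sdiff_disjoint.symm, Finset.sdiff_disjoint.symm⟩
  have hsub : SymF ∪ (((LF \ W2) \ SymF) ∪ ((RF \ W2) \ SymF)) ⊆ Finset.univ \ W2 := by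
    intro u hu
    rw [Finset.mem_union, Finset.mem_union] at hu
    rw [Finset.mem_sdiff]
    refine ⟨Finset.mem_univ _, ?_⟩
    rcases hu with hu | hu | hu
    · intro hW2
      apply hSymW2 u hW2
      rw [hSymF, Finset.mem_filter] at hu
      exact hu.2
    · rw [Finset.mem_sdiff, Finset.mem_sdiff] at hu
      exact hu.1.2
    · rw [Finset.mem_sdiff, Finset.mem_sdiff] at hu
      exact hu.1.2
  have hfinal : SymF.card + (((LF \ W2) \ SymF).card + ((RF \ W2) \ SymF).card) + W2.card
      ≤ q ^ n := by
    have h1 := Finset.card_le_card hsub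
    rw [Finset.card_union_of_disjoint hdA_BC, Finset.card_union_of_disjoint hdBC] at h1
    have h2 := Finset.card_sdiff_add_card_eq_card (Finset.subset_univ W2)
    have h3 : (Finset.univ : Finset (Fin n → ZMod q)).card = q ^ n := by
      rw [Finset.card_univ, Fintype.card_fun, ZMod.card, Fintype.card_fin]
    omega
  have hLsplit : (LF \ W2).card + (LF ∩ W2).card = LF.card :=
    Finset.card_sdiff_add_card_inter _ _
  have hRsplit : (RF \ W2).card + (RF ∩ W2).card = RF.card :=
    Finset.card_sdiff_add_card_inter _ _
  have hBsplit : ((LF \ W2) \ SymF).card + ((LF \ W2) ∩ SymF).card = (LF \ W2).card :=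
    Finset.card_sdiff_add_card_inter _ _
  have hCsplit : ((RF \ W2) \ SymF).card + ((RF \ W2) ∩ SymF).card = (RF \ W2).card :=
    Finset.card_sdiff_add_card_inter _ _
  -- putting the arithmetic together
  obtain ⟨qq, hqq⟩ := hqodd
  have hpow : q ^ (h + 1) = 2 * (qq * q ^ h) + q ^ h := by
    rw [pow_succ, hqq]
    ring
  have hq2e : 2 * ((q / 2) * q ^ h) = 2 * (qq * q ^ h) := by
    rw [show q / 2 = qq by omega]
  have hLW2' : (LF ∩ W2).card ≤ 2 * (qq * q ^ h) := hLW2.trans_eq hq2e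
  have hRW2' : (RF ∩ W2).card ≤ 2 * (qq * q ^ h) := hRW2.trans_eq hq2e
  have hfin : 2 * m + q ^ (h + 1) + 2 * q ^ h ≤ q ^ n + 2 * q := by omega
  have hn1 : (n + 1) / 2 = h + 1 := by omega
  rw [hn1]
  have hcast : ((2 * m + q ^ (h + 1) + 2 * q ^ h : ℕ) : ℤ) ≤ ((q ^ n + 2 * q : ℕ) : ℤ) :=
    Nat.cast_le.mpr hfin
  push_cast at hcast
  have hq1 : (3 : ℤ) ≤ (q : ℤ) := by exact_mod_cast hq
  have hqsq : 2 * (q : ℤ) ≤ (q : ℤ) + (q : ℤ) ^ 2 := by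
    have h2 : (q : ℤ) ≤ (q : ℤ) ^ 2 := by
      calc (q : ℤ) = 1 * (q : ℤ) := (one_mul _).symm
        _ ≤ (q : ℤ) * (q : ℤ) := mul_le_mul_of_nonneg_right (by linarith) (by linarith)
        _ = (q : ℤ) ^ 2 := (pow_two _).symm
    linarith
  linarith [hcast, hqsq]

end OSMain
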